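/- arXiv:math/0002098 — 3 statements merged into one kernel-verified Lean document; each statement's English description precedes it below -/
import Mathlib

section
/- Let A be a finite set of k relatively prime positive integers and let p_A(n) be the number of partitions of n with parts in A. Then p_A(n) is asymptotically equal to (1/∏_{a∈A} a) · n^{k-1}/(k-1)!, i.e., the ratio p_A(n) / ( n^{k-1} / ((k-1)! · ∏_{a∈A} a) ) tends to 1 as n → ∞. -/
open Filter Finset

/-- The number of partitions of `n` with all parts in the finite set `A`. -/
def partitionsIn (A : Finset ℕ) (n : ℕ) : ℕ :=
  (Finset.univ.filter fun p : Nat.Partition n => ∀ i ∈ p.parts, i ∈ A).card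




/-- The finset of multisets with parts in `A` summing to `n`. -/
def Pp (A : Finset ℕ) (n : ℕ) : Finset (Multiset ℕ) :=
  ((n • A.val).powerset.toFinset).filter (fun m => m.sum = n ∧ ∀ i ∈ m, i ∈ A)

lemma mem_Pp {A : Finset ℕ} (hpos : ∀ a ∈ A, 0 < a) {n : ℕ} {m : Multiset ℕ} :
    m ∈ Pp A n ↔ m.sum = n ∧ ∀ i ∈ m, i ∈ A := by
  constructor
  · intro h; exact (Finset.mem_filter.1 h).2
  · rintro ⟨hs, hA⟩
    refine Finset.mem_filter.2 ⟨?_, hs, hA⟩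
    rw [Multiset.mem_toFinset, Multiset.mem_powerset]
    refine Multiset.le_iff_count.2 fun i => ?_
    by_cases hi : i ∈ m
    · have hiA : i ∈ A := hA i hi
      have hcard : m.card ≤ m.sum := by
        have := Multiset.card_nsmul_le_sum (s := m) (a := 1)
          (fun x hx => hpos x (hA x hx))
        simpa using this
      have h1 : m.count i ≤ n := le_trans (Multiset.count_le_card _ _) (by simpa [hs, one_mul] using hcard)
      have : Multiset.count i (n • A.val) = n * Multiset.count i A.val := by
        simp [Multiset.count_nsmul]
      rw [this, Multiset.count_eq_one_of_mem A.nodup hiA, mul_one]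
      exact h1
    · simp [Multiset.count_eq_zero_of_notMem hi]

lemma partitionsIn_eq_card_Pp {A : Finset ℕ} (hpos : ∀ a ∈ A, 0 < a) (n : ℕ) :
    partitionsIn A n = (Pp A n).card := by
  classical
  refine Finset.card_bij (fun p _ => p.parts) ?_ ?_ ?_
  · intro p hp
    rw [mem_Pp hpos]
    exact ⟨p.parts_sum, (Finset.mem_filter.1 hp).2⟩
  · intro p hp q hq h
    exact Nat.Partition.ext h
  · intro m hm
    rw [mem_Pp hpos] at hm
    exact ⟨⟨m, fun hi => hpos _ (hm.2 _ hi), hm.1⟩, Finset.mem_filter.2 ⟨Finset.mem_univ _, hm.2⟩, rfl⟩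



lemma card_Pp_empty (n : ℕ) : (Pp ∅ n).card = if n = 0 then 1 else 0 := by
  have h : ∀ a ∈ (∅ : Finset ℕ), 0 < a := by simp
  split_ifs with hn
  · subst hn
    rw [Finset.card_eq_one]
    exact ⟨0, Finset.eq_singleton_iff_unique_mem.2 ⟨(mem_Pp h).2 (by simp),
      fun m hm => by
        have := (mem_Pp h).1 hm
        exact Multiset.eq_zero_of_forall_notMem (fun x hx => by simpa using this.2 x hx)⟩⟩
  · rw [Finset.card_eq_zero]
    refine Finset.eq_empty_of_forall_notMem fun m hm => ?_
    have := (mem_Pp h).1 hm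
    have hm0 : m = 0 := Multiset.eq_zero_of_forall_notMem (fun x hx => by simpa using this.2 x hx)
    rw [hm0] at this
    exact hn this.1.symm

private lemma filter_add_replicate {a x : ℕ} {p : Multiset ℕ} (hc : p.count a = x) :
    Multiset.filter (· ≠ a) p + Multiset.replicate x a = p := by
  have h1 : Multiset.filter (· = a) p = Multiset.replicate x a := by
    rw [Multiset.filter_eq', hc]
  calc Multiset.filter (· ≠ a) p + Multiset.replicate x a
      = Multiset.filter (· ≠ a) p + Multiset.filter (· = a) p := by rw [h1]
    _ = p := by
        rw [add_comm]
        simpa [eq_comm] using Multiset.filter_add_not (· = a) p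

lemma card_Pp_insert {a : ℕ} {B : Finset ℕ} (ha : a ∉ B)
    (hpos : ∀ x ∈ insert a B, 0 < x) (n : ℕ) :
    (Pp (insert a B) n).card
      = ∑ x ∈ Finset.range (n / a + 1), (Pp B (n - a * x)).card := by
  classical
  have hB : ∀ x ∈ B, 0 < x := fun x hx => hpos x (Finset.mem_insert_of_mem hx)
  have hapos : 0 < a := hpos a (Finset.mem_insert_self a B)
  rw [Finset.card_eq_sum_card_fiberwise
      (f := fun m : Multiset ℕ => m.count a) (t := Finset.range (n / a + 1)) ?_]
  · refine Finset.sum_congr rfl fun x hx => ?_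
    have hax : a * x ≤ n := by
      have hx' : x ≤ n / a := by have := Finset.mem_range.1 hx; omega
      calc a * x = x * a := mul_comm _ _
        _ ≤ (n / a) * a := Nat.mul_le_mul_right a hx'
        _ ≤ n := Nat.div_mul_le_self n a
    refine Finset.card_bij' (fun m _ => Multiset.filter (· ≠ a) m)
      (fun m' _ => m' + Multiset.replicate x a) ?_ ?_ ?_ ?_
    · intro m hm
      beta_reduce
      rw [Finset.mem_filter] at hm
      obtain ⟨hm, hcount⟩ := hm
      rw [mem_Pp hpos] at hm
      have hsplit := filter_add_replicate hcount
      rw [mem_Pp hB]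
      constructor
      · have := congrArg Multiset.sum hsplit
        rw [Multiset.sum_add, Multiset.sum_replicate, smul_eq_mul, hm.1, mul_comm x a] at this
        omega
      · intro i hi
        have hia : i ≠ a := (Multiset.mem_filter.1 hi).2
        have : i ∈ insert a B := hm.2 i (Multiset.mem_of_mem_filter hi)
        exact (Finset.mem_insert.1 this).resolve_left hia
    · intro m' hm'
      rw [mem_Pp hB] at hm'
      have hanotm : a ∉ m' := fun h => ha (hm'.2 a h)
      rw [Finset.mem_filter]
      constructor
      · rw [mem_Pp hpos]
        constructor
        · rw [Multiset.sum_add, Multiset.sum_replicate, smul_eq_mul, hm'.1, mul_comm x a]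
          omega
        · intro i hi
          rcases Multiset.mem_add.1 hi with h | h
          · exact Finset.mem_insert_of_mem (hm'.2 i h)
          · rw [Multiset.eq_of_mem_replicate h]
            exact Finset.mem_insert_self a B
      · rw [Multiset.count_add, Multiset.count_replicate_self,
          Multiset.count_eq_zero_of_notMem hanotm, zero_add]
    · intro m hm
      beta_reduce
      rw [Finset.mem_filter] at hm
      exact filter_add_replicate hm.2
    · intro m' hm'
      rw [mem_Pp hB] at hm'
      have hanotm : a ∉ m' := fun h => ha (hm'.2 a h)
      beta_reduce
      rw [Multiset.filter_add]
      have h1 : Multiset.filter (· ≠ a) m' = m' :=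
        Multiset.filter_eq_self.2 fun i hi h => hanotm (h ▸ hi)
      have h2 : Multiset.filter (· ≠ a) (Multiset.replicate x a) = 0 := by
        simp only [Multiset.filter_eq_nil]
        exact fun i hi => not_not.2 (Multiset.eq_of_mem_replicate hi)
      rw [h1, h2, add_zero]
  · intro m hm
    rw [Finset.mem_coe, mem_Pp hpos] at hm
    rw [Finset.mem_coe, Finset.mem_range]
    have hle : m.count a * a ≤ n := by
      have h1 : Multiset.replicate (m.count a) a ≤ m := by
        rw [← Multiset.filter_eq']
        exact Multiset.filter_le _ m
      obtain ⟨u, hu⟩ := Multiset.le_iff_exists_add.1 h1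
      have hsum := congrArg Multiset.sum hu
      rw [Multiset.sum_add, Multiset.sum_replicate, smul_eq_mul] at hsum
      omega
    have h2 : m.count a ≤ n / a := (Nat.le_div_iff_mul_le hapos).2 hle
    beta_reduce
    omega

lemma two_term_le (x y b : ℕ) : x^(b+1) + (b+1) * x^b * y ≤ (x + y)^(b+1) := by
  rw [add_pow]
  have hsub : ({b, b+1} : Finset ℕ) ⊆ range (b+2) := by
    intro i hi; simp at hi; rcases hi with h | h <;> simp [h]
  have := Finset.sum_le_sum_of_subset (f := fun k => x ^ k * y ^ (b+1-k) * ((b+1).choose k)) hsub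
  refine le_trans ?_ this
  rw [Finset.sum_pair (by omega : b ≠ b + 1)]
  simp [Nat.choose_self, Nat.choose_succ_self_right, pow_succ]
  ring_nf
  omega

lemma pow_succ_le_aux (N b : ℕ) : (N+1)^(b+1) ≤ N^(b+1) + (b+1) * (N+1)^b := by
  rw [add_pow, Finset.sum_range_succ]
  simp only [Nat.cast_id]
  have key : ∑ k ∈ range (b+1), N ^ k * 1 ^ (b+1-k) * ((b+1).choose k) ≤ (b+1) * (N+1)^b := by
    calc ∑ k ∈ range (b+1), N ^ k * 1 ^ (b+1-k) * ((b+1).choose k)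
        ≤ ∑ k ∈ range (b+1), (b+1) * (N ^ k * 1 ^ (b-k) * (b.choose k)) := by
          refine Finset.sum_le_sum fun k hk => ?_
          have hch : (b+1).choose k ≤ (b+1) * b.choose k := by
            have h := Nat.choose_mul_succ_eq b k
            have hk' : k ≤ b := Nat.lt_succ_iff.1 (Finset.mem_range.1 hk)
            calc (b+1).choose k ≤ (b+1).choose k * (b+1-k) :=
                  Nat.le_mul_of_pos_right _ (by omega)
              _ = b.choose k * (b+1) := h.symm
              _ = (b+1) * b.choose k := mul_comm _ _
          simp only [one_pow, mul_one]
          calc N ^ k * ((b+1).choose k) ≤ N ^ k * ((b+1) * b.choose k) :=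
                Nat.mul_le_mul_left _ hch
            _ = (b+1) * (N ^ k * (b.choose k)) := by ring
      _ = (b+1) * ∑ k ∈ range (b+1), N ^ k * 1 ^ (b-k) * (b.choose k) := by
          rw [Finset.mul_sum]
      _ = (b+1) * (N+1)^b := by
          congr 1
          rw [add_pow]
          simp only [Nat.cast_id]
  have h2 : N ^ (b+1) * 1 ^ (b+1-(b+1)) * ((b+1).choose (b+1)) = N^(b+1) := by simp
  rw [h2, add_comm (N^(b+1)) ((b+1) * (N+1)^b)]
  exact Nat.add_le_add_right key _

lemma sum_pow_lower (N b : ℕ) : N^(b+1) ≤ (b+1) * ∑ i ∈ range (N+1), i^b := by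
  induction N with
  | zero => simp
  | succ N ih =>
      rw [Finset.sum_range_succ, Nat.mul_add]
      calc (N+1)^(b+1) ≤ N^(b+1) + (b+1) * (N+1)^b := pow_succ_le_aux N b
        _ ≤ (b+1) * ∑ i ∈ range (N+1), i^b + (b+1) * (N+1)^b := Nat.add_le_add_right ih _

lemma sum_pow_upper (N b : ℕ) : (b+1) * ∑ i ∈ range (N+1), i^b ≤ (N+1)^(b+1) := by
  induction N with
  | zero => cases b <;> simp
  | succ N ih =>
      rw [Finset.sum_range_succ, Nat.mul_add]
      calc (b+1) * ∑ i ∈ range (N+1), i^b + (b+1) * (N+1)^b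
          ≤ (N+1)^(b+1) + (b+1) * (N+1)^b := Nat.add_le_add_right ih _
        _ = (N+1)^(b+1) + (b+1) * (N+1)^b * 1 := by ring
        _ ≤ (N+1+1)^(b+1) := two_term_le (N+1) 1 b

lemma sum_sub_pow_le_mul {a : ℕ} (ha : 0 < a) (N b : ℕ) :
    ∑ j ∈ range (N+1), (N-j)^b ≤ a * ∑ x ∈ range (N/a + 1), (N - a*x)^b := by
  classical
  have hmaps : ∀ j ∈ range (N+1), j / a ∈ range (N/a + 1) := by
    intro j hj
    rw [Finset.mem_range] at hj ⊢
    have := Nat.div_le_div_right (c := a) (Nat.lt_succ_iff.1 hj)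
    omega
  have hfib : ∑ x ∈ range (N/a+1), ∑ j ∈ (range (N+1)).filter (fun j => j/a = x), (N-j)^b
      = ∑ j ∈ range (N+1), (N-j)^b := by
    rw [Finset.sum_fiberwise_eq_sum_filter, Finset.filter_true_of_mem hmaps]
  rw [← hfib, Finset.mul_sum]
  refine Finset.sum_le_sum fun x hx => ?_
  have hcard : ((range (N+1)).filter (fun j => j / a = x)).card ≤ a := by
    have hsubset : (range (N+1)).filter (fun j => j / a = x) ⊆ Finset.Ico (a*x) (a*x+a) := by
      intro j hj
      rw [Finset.mem_filter] at hj
      rw [Finset.mem_Ico]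
      have hdm := Nat.div_add_mod j a
      have hmod : j % a < a := Nat.mod_lt _ ha
      rw [hj.2] at hdm
      omega
    calc ((range (N+1)).filter (fun j => j / a = x)).card
        ≤ (Finset.Ico (a*x) (a*x+a)).card := Finset.card_le_card hsubset
      _ = a := by rw [Nat.card_Ico]; omega
  calc ∑ j ∈ (range (N+1)).filter (fun j => j / a = x), (N-j)^b
      ≤ ∑ j ∈ (range (N+1)).filter (fun j => j / a = x), (N - a*x)^b := by
        refine Finset.sum_le_sum fun j hj => ?_
        rw [Finset.mem_filter] at hj
        refine Nat.pow_le_pow_left ?_ _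
        have : a * x ≤ j := by
          calc a * x = j / a * a := by rw [hj.2]; ring
            _ ≤ j := Nat.div_mul_le_self j a
        omega
    _ = ((range (N+1)).filter (fun j => j / a = x)).card * (N - a*x)^b := by
        rw [Finset.sum_const, smul_eq_mul]
    _ ≤ a * (N - a*x)^b := Nat.mul_le_mul_right _ hcard

lemma mul_sum_sub_pow_le {a : ℕ} (ha : 0 < a) (M m b : ℕ) (hm : a * m ≤ M) :
    a * ∑ x ∈ range (m+1), (M - a*x)^b
      ≤ a * M^b + ∑ j ∈ range (M+1), (M-j)^b := by
  classical
  set I : ℕ → Finset ℕ := fun x => Finset.Ico (a*(x-1)+1) (a*x+1) with hI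
  have hsplit : ∑ x ∈ range (m+1), (M - a*x)^b
      = M^b + ∑ x ∈ Finset.Ico 1 (m+1), (M - a*x)^b := by
    rw [Finset.range_eq_Ico, Finset.sum_eq_sum_Ico_succ_bot (by omega : 0 < m+1)]
    simp
  have hdisj : (↑(Finset.Ico 1 (m+1)) : Set ℕ).PairwiseDisjoint I := by
    have key : ∀ x y : ℕ, 0 < x → x < y → Disjoint (I x) (I y) := by
      intro x y hx hxy
      rw [Finset.disjoint_left]
      intro j hjx hjy
      rw [hI] at hjx hjy
      simp only [Finset.mem_Ico] at hjx hjy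
      have h1 : j ≤ a * x := by omega
      have h2 : a * x + 1 ≤ a * (y-1) + 1 := by
        have : x ≤ y - 1 := by omega
        exact Nat.add_le_add_right (Nat.mul_le_mul_left a this) 1
      omega
    intro x hx y hy hxy
    simp only [Finset.coe_Ico, Set.mem_Ico] at hx hy
    rcases Nat.lt_or_ge x y with h | h
    · exact key x y (by omega) h
    · exact (key y x (by omega) (by omega)).symm
  have hcardI : ∀ x ∈ Finset.Ico 1 (m+1), (I x).card = a := by
    intro x hx
    rw [Finset.mem_Ico] at hx
    obtain ⟨y, rfl⟩ : ∃ y, x = y + 1 := ⟨x - 1, by omega⟩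
    rw [hI]
    simp only [Nat.add_sub_cancel, Nat.card_Ico, Nat.mul_add, Nat.mul_one]
    omega
  have hsub : (Finset.Ico 1 (m+1)).biUnion I ⊆ range (M+1) := by
    intro j hj
    rw [Finset.mem_biUnion] at hj
    obtain ⟨x, hx, hjx⟩ := hj
    rw [Finset.mem_Ico] at hx
    rw [hI] at hjx
    simp only [Finset.mem_Ico] at hjx
    rw [Finset.mem_range]
    have : a * x ≤ a * m := Nat.mul_le_mul_left a (by omega)
    omega
  have main : a * ∑ x ∈ Finset.Ico 1 (m+1), (M - a*x)^b ≤ ∑ j ∈ range (M+1), (M-j)^b := by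
    calc a * ∑ x ∈ Finset.Ico 1 (m+1), (M - a*x)^b
        = ∑ x ∈ Finset.Ico 1 (m+1), ∑ j ∈ I x, (M - a*x)^b := by
          rw [Finset.mul_sum]
          refine Finset.sum_congr rfl fun x hx => ?_
          rw [Finset.sum_const, smul_eq_mul, hcardI x hx]
      _ ≤ ∑ x ∈ Finset.Ico 1 (m+1), ∑ j ∈ I x, (M - j)^b := by
          refine Finset.sum_le_sum fun x hx => Finset.sum_le_sum fun j hj => ?_
          rw [hI] at hj
          simp only [Finset.mem_Ico] at hj
          exact Nat.pow_le_pow_left (by omega) _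
      _ = ∑ j ∈ (Finset.Ico 1 (m+1)).biUnion I, (M - j)^b := (Finset.sum_biUnion hdisj).symm
      _ ≤ ∑ j ∈ range (M+1), (M-j)^b := Finset.sum_le_sum_of_subset hsub
  calc a * ∑ x ∈ range (m+1), (M - a*x)^b
      = a * M^b + a * ∑ x ∈ Finset.Ico 1 (m+1), (M - a*x)^b := by rw [hsplit]; ring
    _ ≤ a * M^b + ∑ j ∈ range (M+1), (M-j)^b := Nat.add_le_add_left main _

def TT (A : Finset ℕ) (N : ℕ) : ℕ := ∑ n ∈ Finset.range (N+1), (Pp A n).card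



lemma TT_empty (N : ℕ) : TT ∅ N = 1 := by
  unfold TT
  rw [Finset.sum_congr rfl (fun n _ => card_Pp_empty n)]
  rw [Finset.sum_ite_eq' (Finset.range (N+1)) 0 (fun _ => 1)]
  simp

lemma TT_insert {a : ℕ} {B : Finset ℕ} (ha : a ∉ B)
    (hpos : ∀ x ∈ insert a B, 0 < x) (N : ℕ) :
    TT (insert a B) N = ∑ x ∈ Finset.range (N / a + 1), TT B (N - a * x) := by
  have hapos : 0 < a := hpos a (Finset.mem_insert_self a B)
  unfold TT
  rw [Finset.sum_congr rfl (fun n _ => card_Pp_insert ha hpos n)]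
  rw [Finset.sum_sigma' (Finset.range (N+1)) (fun n => Finset.range (n/a+1))
    (fun n x => (Pp B (n - a * x)).card),
    Finset.sum_sigma' (Finset.range (N/a+1)) (fun x => Finset.range (N - a*x + 1))
    (fun x m => (Pp B m).card)]
  refine Finset.sum_nbij' (fun p => ⟨p.2, p.1 - a * p.2⟩) (fun q => ⟨a * q.1 + q.2, q.1⟩)
    ?_ ?_ ?_ ?_ ?_
  · rintro ⟨n, x⟩ hp
    rw [Finset.mem_sigma] at hp ⊢
    dsimp only at hp ⊢
    obtain ⟨hn, hx⟩ := hp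
    rw [Finset.mem_range] at hn hx
    have hax : a * x ≤ n := by
      have hx' : x ≤ n / a := by omega
      calc a * x = x * a := mul_comm _ _
        _ ≤ n / a * a := Nat.mul_le_mul_right a hx'
        _ ≤ n := Nat.div_mul_le_self n a
    constructor
    · rw [Finset.mem_range]
      have : x ≤ N / a := (Nat.le_div_iff_mul_le hapos).2 (by rw [mul_comm]; omega)
      omega
    · rw [Finset.mem_range]; omega
  · rintro ⟨x, m⟩ hq
    rw [Finset.mem_sigma] at hq ⊢
    dsimp only at hq ⊢
    obtain ⟨hx, hm⟩ := hq
    rw [Finset.mem_range] at hx hm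
    have hax : a * x ≤ N := by
      have hx' : x ≤ N / a := by omega
      calc a * x = x * a := mul_comm _ _
        _ ≤ N / a * a := Nat.mul_le_mul_right a hx'
        _ ≤ N := Nat.div_mul_le_self N a
    constructor
    · rw [Finset.mem_range]; omega
    · rw [Finset.mem_range]
      have : x ≤ (a * x + m) / a := (Nat.le_div_iff_mul_le hapos).2 (by rw [mul_comm]; omega)
      omega
  · rintro ⟨n, x⟩ hp
    rw [Finset.mem_sigma] at hp
    dsimp only at hp ⊢
    obtain ⟨hn, hx⟩ := hp
    rw [Finset.mem_range] at hn hx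
    have hax : a * x ≤ n := by
      have hx' : x ≤ n / a := by omega
      calc a * x = x * a := mul_comm _ _
        _ ≤ n / a * a := Nat.mul_le_mul_right a hx'
        _ ≤ n := Nat.div_mul_le_self n a
    simp only [Sigma.mk.inj_iff]
    exact ⟨by omega, heq_of_eq rfl⟩
  · rintro ⟨x, m⟩ hq
    simp only [Sigma.mk.inj_iff]
    exact ⟨trivial, heq_of_eq (by omega)⟩
  · rintro ⟨n, x⟩ hp
    rfl

lemma TT_lower (A : Finset ℕ) (hpos : ∀ a ∈ A, 0 < a) (N : ℕ) :
    N ^ A.card ≤ (A.card).factorial * (∏ a ∈ A, a) * TT A N := by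
  classical
  induction A using Finset.induction_on generalizing N with
  | empty => simp [TT_empty]
  | insert a B ha ih =>
      have hB : ∀ x ∈ B, 0 < x := fun x hx => hpos x (Finset.mem_insert_of_mem hx)
      have hapos : 0 < a := hpos a (Finset.mem_insert_self a B)
      set b := B.card with hb
      rw [Finset.card_insert_of_notMem ha, Finset.prod_insert ha, TT_insert ha hpos]
      have step1 : ∀ x ∈ Finset.range (N/a + 1),
          (N - a*x) ^ b ≤ b.factorial * (∏ c ∈ B, c) * TT B (N - a*x) :=
        fun x _ => ih hB _
      calc N ^ (b+1)
          ≤ (b+1) * ∑ i ∈ range (N+1), i^b := sum_pow_lower N b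
        _ = (b+1) * ∑ j ∈ range (N+1), (N-j)^b := by
            have hrefl : ∑ j ∈ range (N+1), (N-j)^b = ∑ i ∈ range (N+1), i^b := by
              simpa using Finset.sum_range_reflect (fun i => i^b) (N+1)
            rw [hrefl]
        _ ≤ (b+1) * (a * ∑ x ∈ range (N/a + 1), (N - a*x)^b) :=
            Nat.mul_le_mul_left _ (sum_sub_pow_le_mul hapos N b)
        _ ≤ (b+1) * (a * ∑ x ∈ range (N/a + 1), b.factorial * (∏ c ∈ B, c) * TT B (N - a*x)) := by
            refine Nat.mul_le_mul_left _ (Nat.mul_le_mul_left _ (Finset.sum_le_sum step1))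
        _ = (b+1).factorial * (a * ∏ c ∈ B, c) * ∑ x ∈ range (N/a+1), TT B (N - a*x) := by
            rw [Finset.mul_sum, Finset.mul_sum, Finset.mul_sum, Nat.factorial_succ]
            refine Finset.sum_congr rfl fun x _ => by ring

lemma TT_upper (A : Finset ℕ) (hpos : ∀ a ∈ A, 0 < a) (N : ℕ) :
    (A.card).factorial * (∏ a ∈ A, a) * TT A N ≤ (N + ∑ a ∈ A, (a+1)) ^ A.card := by
  classical
  induction A using Finset.induction_on generalizing N with
  | empty => simp [TT_empty]
  | insert a B ha ih =>
      have hB : ∀ x ∈ B, 0 < x := fun x hx => hpos x (Finset.mem_insert_of_mem hx)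
      have hapos : 0 < a := hpos a (Finset.mem_insert_self a B)
      set b := B.card with hb
      set s := ∑ c ∈ B, (c+1) with hs
      rw [Finset.card_insert_of_notMem ha, Finset.prod_insert ha, TT_insert ha hpos,
        Finset.sum_insert ha]
      have hM : a * (N / a) ≤ N + s := le_trans (by
        calc a * (N/a) = N/a * a := mul_comm _ _
          _ ≤ N := Nat.div_mul_le_self N a) (Nat.le_add_right _ _)
      calc (b+1).factorial * (a * ∏ c ∈ B, c) * ∑ x ∈ range (N/a+1), TT B (N - a*x)
          = (b+1) * (a * ∑ x ∈ range (N/a+1), b.factorial * (∏ c ∈ B, c) * TT B (N - a*x)) := by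
            rw [Finset.mul_sum, Finset.mul_sum, Finset.mul_sum, Nat.factorial_succ]
            refine Finset.sum_congr rfl fun x _ => by ring
        _ ≤ (b+1) * (a * ∑ x ∈ range (N/a+1), (N - a*x + s)^b) := by
            refine Nat.mul_le_mul_left _ (Nat.mul_le_mul_left _ (Finset.sum_le_sum
              fun x _ => ih hB _))
        _ = (b+1) * (a * ∑ x ∈ range (N/a+1), ((N+s) - a*x)^b) := by
            congr 2
            refine Finset.sum_congr rfl fun x hx => ?_
            congr 1
            rw [Finset.mem_range] at hx
            have hax : a * x ≤ N := by
              have hx' : x ≤ N / a := by omega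
              calc a * x = x * a := mul_comm _ _
                _ ≤ N / a * a := Nat.mul_le_mul_right a hx'
                _ ≤ N := Nat.div_mul_le_self N a
            omega
        _ ≤ (b+1) * (a * (N+s)^b + ∑ j ∈ range (N+s+1), ((N+s)-j)^b) := by
            refine Nat.mul_le_mul_left _ ?_
            exact mul_sum_sub_pow_le hapos (N+s) (N/a) b hM
        _ = (b+1) * (a * (N+s)^b) + (b+1) * ∑ j ∈ range (N+s+1), ((N+s)-j)^b := by ring
        _ = (b+1) * (a * (N+s)^b) + (b+1) * ∑ i ∈ range (N+s+1), i^b := by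
            have hrefl : ∑ j ∈ range (N+s+1), ((N+s)-j)^b = ∑ i ∈ range (N+s+1), i^b := by
              simpa using Finset.sum_range_reflect (fun i => i^b) (N+s+1)
            rw [hrefl]
        _ ≤ (b+1) * (a * (N+s)^b) + (N+s+1)^(b+1) := Nat.add_le_add_left (sum_pow_upper _ _) _
        _ ≤ (N+s+1)^(b+1) + (b+1) * (N+s+1)^b * a := by
            rw [add_comm]
            refine Nat.add_le_add_left ?_ _
            calc (b+1) * (a * (N+s)^b) = (b+1) * (N+s)^b * a := by ring
              _ ≤ (b+1) * (N+s+1)^b * a :=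
                Nat.mul_le_mul_right _ (Nat.mul_le_mul_left _ (Nat.pow_le_pow_left (by omega) _))
        _ ≤ (N+s+1+a)^(b+1) := two_term_le (N+s+1) a b
        _ = (N + (a+1+s))^(b+1) := by ring_nf


lemma exists_rep (B : Finset ℕ) (hpos : ∀ a ∈ B, 0 < a) :
    ∃ F : ℕ, ∀ c : ℕ, B.gcd id ∣ c → F ≤ c →
      ∃ m : Multiset ℕ, (∀ i ∈ m, i ∈ B) ∧ m.sum = c := by
  classical
  induction B using Finset.induction_on with
  | empty =>
      refine ⟨0, fun c hdvd _ => ⟨0, by simp, ?_⟩⟩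
      have : c = 0 := Nat.eq_zero_of_zero_dvd (by simpa using hdvd)
      simp [this]
  | insert a B ha ih =>
      have hB : ∀ x ∈ B, 0 < x := fun x hx => hpos x (Finset.mem_insert_of_mem hx)
      have hapos : 0 < a := hpos a (Finset.mem_insert_self a B)
      obtain ⟨F, hF⟩ := ih hB
      set d := B.gcd id with hd
      by_cases hd0 : d = 0
      · -- all elements of B are zero, but positive: B = ∅-behavior, gcd insert = a
        refine ⟨0, fun c hdvd _ => ?_⟩
        rw [Finset.gcd_insert, ← hd, hd0] at hdvd
        simp only [id] at hdvd
        have hac : a ∣ c := by simpa using hdvd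
        refine ⟨Multiset.replicate (c / a) a, ?_, ?_⟩
        · intro i hi
          rw [Multiset.eq_of_mem_replicate hi]
          exact Finset.mem_insert_self a B
        · rw [Multiset.sum_replicate, smul_eq_mul, Nat.div_mul_cancel hac]
      · have hdpos : 0 < d := Nat.pos_of_ne_zero hd0
        refine ⟨F + a * d, fun c hdvd hc => ?_⟩
        rw [Finset.gcd_insert, ← hd] at hdvd
        simp only [id] at hdvd
        set g := Nat.gcd a d with hg
        have hgdvd : g ∣ c := hdvd
        -- Bezout
        have hbez : (g : ℤ) = a * Nat.gcdA a d + d * Nat.gcdB a d := Nat.gcd_eq_gcd_ab a d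
        set t : ℤ := Nat.gcdA a d * ((c / g : ℕ) : ℤ) with ht
        have hgpos : 0 < g := Nat.gcd_pos_of_pos_left d hapos
        have hcg : (g : ℤ) * ((c / g : ℕ) : ℤ) = (c : ℤ) := by
          exact_mod_cast Nat.mul_div_cancel' hgdvd
        have hmod : (a : ℤ) * t ≡ c [ZMOD d] := by
          have : (a : ℤ) * t = (g : ℤ) * ((c / g : ℕ) : ℤ) - d * (Nat.gcdB a d * ((c / g : ℕ) : ℤ)) := by
            rw [ht, hbez]; ring
          rw [this, hcg]
          unfold Int.ModEq
          simp [Int.sub_emod, Int.mul_emod_right]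
        set x₀ : ℕ := (t % d).toNat with hx₀
        have hx₀lt : x₀ < d := by
          have h1 : 0 ≤ t % (d : ℤ) := Int.emod_nonneg t (by exact_mod_cast hd0)
          have h2 : t % (d : ℤ) < d := Int.emod_lt_of_pos t (by exact_mod_cast hdpos)
          omega
        have hx₀cast : (x₀ : ℤ) = t % d := by
          have h1 : 0 ≤ t % (d : ℤ) := Int.emod_nonneg t (by exact_mod_cast hd0)
          simp [hx₀, Int.toNat_of_nonneg h1]
        have haxd : a * x₀ < a * d := Nat.mul_lt_mul_of_le_of_lt le_rfl hx₀lt hapos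
        have hax₀ : a * x₀ ≤ c := by omega
        have hdvd2 : d ∣ c - a * x₀ := by
          have hx₀t : (x₀ : ℤ) ≡ t [ZMOD (d : ℤ)] := by
            rw [hx₀cast]
            exact Int.emod_emod_of_dvd t dvd_rfl
          have hmod2 : (a : ℤ) * x₀ ≡ c [ZMOD d] := (Int.ModEq.mul_left a hx₀t).trans hmod
          have hdd : (d : ℤ) ∣ (c : ℤ) - a * x₀ := Int.ModEq.dvd hmod2
          have hcast : ((c - a * x₀ : ℕ) : ℤ) = (c : ℤ) - (a : ℤ) * (x₀ : ℤ) := by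
            rw [Nat.cast_sub hax₀, Nat.cast_mul]
          have : (d : ℤ) ∣ ((c - a * x₀ : ℕ) : ℤ) := by rw [hcast]; exact hdd
          exact_mod_cast this
        obtain ⟨mB, hmB, hmBsum⟩ := hF (c - a * x₀) hdvd2 (by omega)
        refine ⟨mB + Multiset.replicate x₀ a, ?_, ?_⟩
        · intro i hi
          rcases Multiset.mem_add.1 hi with h | h
          · exact Finset.mem_insert_of_mem (hmB i h)
          · rw [Multiset.eq_of_mem_replicate h]
            exact Finset.mem_insert_self a B
        · rw [Multiset.sum_add, Multiset.sum_replicate, smul_eq_mul, hmBsum, mul_comm x₀ a]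
          omega

lemma card_Pp_mono (A : Finset ℕ) (hpos : ∀ a ∈ A, 0 < a) (hgcd : A.gcd id = 1) :
    ∃ F : ℕ, ∀ n m : ℕ, n + F ≤ m → (Pp A n).card ≤ (Pp A m).card := by
  classical
  obtain ⟨F, hF⟩ := exists_rep A hpos
  refine ⟨F, fun n m hnm => ?_⟩
  obtain ⟨m₀, hm₀, hm₀sum⟩ := hF (m - n) (by rw [hgcd]; exact one_dvd _) (by omega)
  refine Finset.card_le_card_of_injOn (fun x => x + m₀) ?_ ?_
  · intro x hx
    rw [Finset.mem_coe, mem_Pp hpos] at hx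
    rw [Finset.mem_coe, mem_Pp hpos]
    refine ⟨?_, ?_⟩
    · rw [Multiset.sum_add, hx.1, hm₀sum]; omega
    · intro i hi
      rcases Multiset.mem_add.1 hi with h | h
      · exact hx.2 i h
      · exact hm₀ i h
  · intro x hx y hy hxy
    simpa using hxy

lemma real_pow_sub_pow_le {x y : ℝ} (p : ℕ) (h0 : 0 ≤ y) (hxy : y ≤ x) :
    x^(p+1) - y^(p+1) ≤ (p+1) * (x - y) * x^p := by
  have hx : 0 ≤ x := le_trans h0 hxy
  rw [← geom_sum₂_mul x y (p+1)]
  have hsum : (∑ i ∈ range (p+1), x ^ i * y ^ (p - i)) ≤ (p+1) * x^p := by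
    calc (∑ i ∈ range (p+1), x ^ i * y ^ (p - i))
        ≤ ∑ i ∈ range (p+1), x^p := by
          refine Finset.sum_le_sum fun i hi => ?_
          rw [Finset.mem_range] at hi
          calc x ^ i * y ^ (p - i) ≤ x ^ i * x ^ (p - i) := by
                refine mul_le_mul_of_nonneg_left (pow_le_pow_left₀ h0 hxy _) (pow_nonneg hx _)
            _ = x ^ p := by rw [← pow_add]; congr 1; omega
      _ = (p+1) * x^p := by rw [Finset.sum_const, Finset.card_range]; push_cast; ring
  have hsub : (0:ℝ) ≤ x - y := by linarith
  calc (∑ i ∈ range (p+1), x ^ i * y ^ (p + 1 - 1 - i)) * (x - y)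
      ≤ ((p+1) * x^p) * (x - y) := by
        refine mul_le_mul_of_nonneg_right ?_ hsub
        simpa using hsum
    _ = (p+1) * (x - y) * x^p := by ring

lemma real_pow_sub_pow_ge {x y : ℝ} (p : ℕ) (h0 : 0 ≤ y) (hxy : y ≤ x) :
    (p+1) * (x - y) * y^p ≤ x^(p+1) - y^(p+1) := by
  rw [← geom_sum₂_mul x y (p+1)]
  have hsum : ((p+1 : ℝ) * y^p) ≤ ∑ i ∈ range (p+1), x ^ i * y ^ (p - i) := by
    calc ((p+1:ℝ) * y^p) = ∑ _i ∈ range (p+1), y^p := by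
          rw [Finset.sum_const, Finset.card_range]; push_cast; ring
      _ ≤ ∑ i ∈ range (p+1), x ^ i * y ^ (p - i) := by
          refine Finset.sum_le_sum fun i hi => ?_
          rw [Finset.mem_range] at hi
          calc y ^ p = y ^ i * y ^ (p - i) := by rw [← pow_add]; congr 1; omega
            _ ≤ x ^ i * y ^ (p - i) := by
                refine mul_le_mul_of_nonneg_right (pow_le_pow_left₀ h0 hxy _) (pow_nonneg h0 _)
  have hsub : (0:ℝ) ≤ x - y := by linarith
  calc ((p:ℝ)+1) * (x - y) * y^p = ((p+1) * y^p) * (x - y) := by ring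
    _ ≤ (∑ i ∈ range (p+1), x ^ i * y ^ (p + 1 - 1 - i)) * (x - y) := by
        refine mul_le_mul_of_nonneg_right ?_ hsub
        simpa using hsum

lemma nat_sqrt_tendsto : Tendsto (fun n : ℕ => Nat.sqrt n) atTop atTop := by
  refine tendsto_atTop.2 fun C => ?_
  filter_upwards [eventually_ge_atTop (C ^ 2)] with n hn
  calc C = Nat.sqrt (C ^ 2) := (Nat.sqrt_eq' C).symm
    _ ≤ Nat.sqrt n := Nat.sqrt_le_sqrt hn

lemma sqrt_cast_tendsto : Tendsto (fun n : ℕ => (Nat.sqrt n : ℝ)) atTop atTop :=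
  tendsto_natCast_atTop_atTop.comp nat_sqrt_tendsto

lemma sqrt_div_tendsto : Tendsto (fun n : ℕ => (Nat.sqrt n : ℝ) / n) atTop (nhds 0) := by
  have hup : Tendsto (fun n : ℕ => 1 / ((Nat.sqrt n : ℝ))) atTop (nhds 0) :=
    tendsto_const_nhds.div_atTop sqrt_cast_tendsto
  refine tendsto_of_tendsto_of_tendsto_of_le_of_le' tendsto_const_nhds hup ?_ ?_
  · filter_upwards [eventually_ge_atTop 1] with n hn
    positivity
  · filter_upwards [eventually_ge_atTop 1] with n hn
    have h1 : 1 ≤ Nat.sqrt n := by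
      have : Nat.sqrt 1 ≤ Nat.sqrt n := Nat.sqrt_le_sqrt hn
      simpa using this
    have hs : (Nat.sqrt n : ℝ) * (Nat.sqrt n : ℝ) ≤ (n : ℝ) := by
      exact_mod_cast Nat.sqrt_le n
    have hnpos : (0:ℝ) < n := by exact_mod_cast hn
    have hspos : (0:ℝ) < (Nat.sqrt n : ℝ) := by exact_mod_cast h1
    rw [div_le_div_iff₀ hnpos hspos]
    nlinarith

lemma tauberian (f : ℕ → ℕ) (b s G c : ℕ) (hc : 0 < c)
    (MU : ∀ n h : ℕ, (n + G)^(b+1) + c * (h+1) * f n ≤ (n + G + h + 1 + s)^(b+1))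
    (MD : ∀ m h : ℕ, (m + h + 1)^(b+1) ≤ c * (h+1) * f (m + h + 2 + G) + (m + s)^(b+1)) :
    Tendsto (fun n : ℕ => (f n : ℝ) * c / ((b+1) * (n:ℝ)^b)) atTop (nhds 1) := by
  set ghi : ℕ → ℝ := fun n =>
    (1 + s/((Nat.sqrt n : ℝ)+1)) * (1 + ((G:ℝ)+1+s)/n + (Nat.sqrt n : ℝ)/n)^b with hghi
  set glo : ℕ → ℝ := fun n =>
    (1 - s/((Nat.sqrt n : ℝ)+1)) * (1 - ((G:ℝ)+2)/n - (Nat.sqrt n : ℝ)/n)^b with hglo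
  have hplus : Tendsto (fun n : ℕ => (Nat.sqrt n : ℝ) + 1) atTop atTop :=
    tendsto_atTop_add_const_right _ 1 sqrt_cast_tendsto
  have hsdiv : Tendsto (fun n : ℕ => (s:ℝ)/((Nat.sqrt n : ℝ)+1)) atTop (nhds 0) :=
    tendsto_const_nhds.div_atTop hplus
  have hGdiv : Tendsto (fun n : ℕ => ((G:ℝ)+1+s)/n) atTop (nhds 0) :=
    tendsto_const_nhds.div_atTop tendsto_natCast_atTop_atTop
  have hG2div : Tendsto (fun n : ℕ => ((G:ℝ)+2)/n) atTop (nhds 0) :=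
    tendsto_const_nhds.div_atTop tendsto_natCast_atTop_atTop
  have hghi_lim : Tendsto ghi atTop (nhds 1) := by
    have l1 : Tendsto (fun n : ℕ => 1 + (s:ℝ)/((Nat.sqrt n:ℝ)+1)) atTop (nhds 1) := by
      simpa using tendsto_const_nhds.add hsdiv
    have l2 : Tendsto (fun n : ℕ => (1 + ((G:ℝ)+1+s)/n + (Nat.sqrt n:ℝ)/n)^b) atTop (nhds 1) := by
      have h0 : Tendsto (fun n : ℕ => 1 + ((G:ℝ)+1+s)/n + (Nat.sqrt n:ℝ)/n) atTop (nhds 1) := by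
        simpa using (tendsto_const_nhds.add hGdiv).add sqrt_div_tendsto
      simpa using h0.pow b
    simpa using l1.mul l2
  have hglo_lim : Tendsto glo atTop (nhds 1) := by
    have l1 : Tendsto (fun n : ℕ => 1 - (s:ℝ)/((Nat.sqrt n:ℝ)+1)) atTop (nhds 1) := by
      simpa using tendsto_const_nhds.sub hsdiv
    have l2 : Tendsto (fun n : ℕ => (1 - ((G:ℝ)+2)/n - (Nat.sqrt n:ℝ)/n)^b) atTop (nhds 1) := by
      have h0 : Tendsto (fun n : ℕ => 1 - ((G:ℝ)+2)/n - (Nat.sqrt n:ℝ)/n) atTop (nhds 1) := by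
        simpa using (tendsto_const_nhds.sub hG2div).sub sqrt_div_tendsto
      simpa using h0.pow b
    simpa using l1.mul l2
  refine tendsto_of_tendsto_of_tendsto_of_le_of_le' hglo_lim hghi_lim ?_ ?_
  · -- lower bound
    have e1 : ∀ᶠ n : ℕ in atTop, s + G + 2 ≤ Nat.sqrt n :=
      nat_sqrt_tendsto.eventually_ge_atTop _
    have e2 : ∀ᶠ n : ℕ in atTop, 2 * (Nat.sqrt n + G + 2) ≤ n := by
      filter_upwards [nat_sqrt_tendsto.eventually_ge_atTop (2*(G+2)),
        nat_sqrt_tendsto.eventually_ge_atTop 4] with n h1 h2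
      have hs := Nat.sqrt_le n
      have h3 : 3 * Nat.sqrt n ≤ Nat.sqrt n * Nat.sqrt n := by nlinarith
      omega
    have e3 : ∀ᶠ n : ℕ in atTop, 1 ≤ n := eventually_ge_atTop 1
    filter_upwards [e1, e2, e3] with n h1 h2 h3
    set H := Nat.sqrt n with hH
    have hn_big : H + G + 2 ≤ n := by omega
    set m := n - H - 2 - G with hm
    have hmn : m + H + 2 + G = n := by omega
    have key := MD m H
    rw [hmn] at key
    have keyR : ((m + H + 1 : ℕ) : ℝ)^(b+1)
        ≤ (c:ℝ) * ((H:ℝ)+1) * (f n : ℝ) + ((m + s : ℕ):ℝ)^(b+1) := by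
      exact_mod_cast key
    have hyx : ((m + s : ℕ) : ℝ) ≤ ((m + H + 1 : ℕ) : ℝ) := by
      have : m + s ≤ m + H + 1 := by omega
      exact_mod_cast this
    have hy0 : (0:ℝ) ≤ ((m + s : ℕ) : ℝ) := by positivity
    have hgeom := real_pow_sub_pow_ge (x := ((m + H + 1 : ℕ) : ℝ)) (y := ((m + s : ℕ) : ℝ))
      b hy0 hyx
    have hdiff : ((m + H + 1 : ℕ) : ℝ) - ((m + s : ℕ) : ℝ) = (H:ℝ) + 1 - s := by
      push_cast; ring
    have hkey2 : ((b:ℝ)+1) * (((H:ℝ)+1-s) * ((m:ℝ))^b) ≤ (c:ℝ) * ((H:ℝ)+1) * (f n : ℝ) := by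
      have hmono : ((m:ℝ))^b ≤ ((m + s : ℕ):ℝ)^b := by
        refine pow_le_pow_left₀ (by positivity) ?_ _
        push_cast; linarith [Nat.cast_nonneg (α := ℝ) s]
      have hscast : (s:ℝ) ≤ (H:ℝ) := by exact_mod_cast le_trans (by omega : s ≤ s + G + 2) h1
      have hcoef : (0:ℝ) ≤ (H:ℝ)+1-s := by linarith
      calc ((b:ℝ)+1) * (((H:ℝ)+1-s) * ((m:ℝ))^b)
          = ((b:ℝ)+1) * ((H:ℝ)+1-s) * ((m:ℝ))^b := by ring
        _ ≤ ((b:ℝ)+1) * ((H:ℝ)+1-s) * ((m + s : ℕ):ℝ)^b := by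
            refine mul_le_mul_of_nonneg_left hmono (by positivity)
        _ = ((b:ℝ)+1) * (((m + H + 1 : ℕ) : ℝ) - ((m + s : ℕ) : ℝ)) * ((m + s : ℕ):ℝ)^b := by
            rw [hdiff]
        _ ≤ ((m + H + 1 : ℕ) : ℝ)^(b+1) - ((m + s : ℕ):ℝ)^(b+1) := hgeom
        _ ≤ (c:ℝ) * ((H:ℝ)+1) * (f n : ℝ) := by linarith
    have hnpos : (0:ℝ) < (n:ℝ) := by exact_mod_cast h3
    have hnb : (0:ℝ) < (n:ℝ)^b := by positivity
    have hHpos : (0:ℝ) < (H:ℝ)+1 := by positivity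
    have hD : (0:ℝ) < ((b:ℝ)+1) * (n:ℝ)^b := by positivity
    have hmcast : ((m:ℝ)) = (n:ℝ) - H - 2 - G := by
      have h5 : (m:ℝ) + H + 2 + G = (n:ℝ) := by exact_mod_cast hmn
      linarith
    have hfac2 : 1 - ((G:ℝ)+2)/n - (H:ℝ)/n = (m:ℝ)/n := by
      rw [hmcast]; field_simp; ring
    have hfac1 : 1 - (s:ℝ)/((H:ℝ)+1) = ((H:ℝ)+1-s)/((H:ℝ)+1) := by
      field_simp
    rw [hglo]
    dsimp only
    rw [le_div_iff₀ hD, hfac2, hfac1, div_pow]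
    calc ((H:ℝ)+1-s)/((H:ℝ)+1) * ((m:ℝ)^b/(n:ℝ)^b) * (((b:ℝ)+1) * (n:ℝ)^b)
        = (((b:ℝ)+1) * (((H:ℝ)+1-s) * (m:ℝ)^b)) / ((H:ℝ)+1) := by
          field_simp
      _ ≤ ((c:ℝ) * ((H:ℝ)+1) * (f n : ℝ)) / ((H:ℝ)+1) := by
          gcongr
      _ = (f n : ℝ) * c := by field_simp
  · -- upper bound
    filter_upwards [eventually_ge_atTop 1] with n h3
    set H := Nat.sqrt n with hH
    have key := MU n H
    have keyR : ((n + G : ℕ) : ℝ)^(b+1) + (c:ℝ) * ((H:ℝ)+1) * (f n : ℝ)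
        ≤ ((n + G + H + 1 + s : ℕ):ℝ)^(b+1) := by
      exact_mod_cast key
    have hyx : ((n + G : ℕ) : ℝ) ≤ ((n + G + H + 1 + s : ℕ) : ℝ) := by
      have : n + G ≤ n + G + H + 1 + s := by omega
      exact_mod_cast this
    have hy0 : (0:ℝ) ≤ ((n + G : ℕ) : ℝ) := by positivity
    have hgeom := real_pow_sub_pow_le (x := ((n + G + H + 1 + s : ℕ) : ℝ))
      (y := ((n + G : ℕ) : ℝ)) b hy0 hyx
    have hdiff : ((n + G + H + 1 + s : ℕ) : ℝ) - ((n + G : ℕ) : ℝ) = (H:ℝ) + 1 + s := by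
      push_cast; ring
    have hkey2 : (c:ℝ) * ((H:ℝ)+1) * (f n : ℝ)
        ≤ ((b:ℝ)+1) * (((H:ℝ)+1+s) * ((n + G + H + 1 + s : ℕ):ℝ)^b) := by
      calc (c:ℝ) * ((H:ℝ)+1) * (f n : ℝ)
          ≤ ((n + G + H + 1 + s : ℕ):ℝ)^(b+1) - ((n + G : ℕ) : ℝ)^(b+1) := by linarith
        _ ≤ ((b:ℝ)+1) * (((n + G + H + 1 + s : ℕ):ℝ) - ((n + G : ℕ) : ℝ))
              * ((n + G + H + 1 + s : ℕ):ℝ)^b := hgeom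
        _ = ((b:ℝ)+1) * (((H:ℝ)+1+s) * ((n + G + H + 1 + s : ℕ):ℝ)^b) := by rw [hdiff]; ring
    have hnpos : (0:ℝ) < (n:ℝ) := by exact_mod_cast h3
    have hHpos : (0:ℝ) < (H:ℝ)+1 := by positivity
    have hD : (0:ℝ) < ((b:ℝ)+1) * (n:ℝ)^b := by positivity
    have hfac2 : 1 + ((G:ℝ)+1+s)/n + (H:ℝ)/n = ((n + G + H + 1 + s : ℕ):ℝ)/n := by
      push_cast; field_simp; ring
    have hfac1 : 1 + (s:ℝ)/((H:ℝ)+1) = ((H:ℝ)+1+s)/((H:ℝ)+1) := by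
      field_simp
    rw [hghi]
    dsimp only
    rw [div_le_iff₀ hD, hfac2, hfac1, div_pow]
    calc (f n : ℝ) * c
        = ((c:ℝ) * ((H:ℝ)+1) * (f n : ℝ)) / ((H:ℝ)+1) := by field_simp
      _ ≤ (((b:ℝ)+1) * (((H:ℝ)+1+s) * ((n + G + H + 1 + s : ℕ):ℝ)^b)) / ((H:ℝ)+1) := by
          gcongr
      _ = ((H:ℝ)+1+s)/((H:ℝ)+1) * (((n + G + H + 1 + s : ℕ):ℝ)^b/(n:ℝ)^b)
            * (((b:ℝ)+1) * (n:ℝ)^b) := by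
          field_simp


/-- Let `A` be a finite set of `k` relatively prime positive integers. Then
`p_A(n) / (n^(k-1) / ((k-1)! · ∏_{a ∈ A} a)) → 1` as `n → ∞`. -/
theorem partitionsIn_ratio_tendsto_one (A : Finset ℕ) (hpos : ∀ a ∈ A, 0 < a)
    (hgcd : A.gcd id = 1) :
    Tendsto (fun n : ℕ => (partitionsIn A n : ℝ) /
        ((n : ℝ) ^ (A.card - 1) / (Nat.factorial (A.card - 1) * ∏ a ∈ A, (a : ℝ))))
      atTop (nhds 1) := by
  classical
  have hA : A.Nonempty := by
    rcases Finset.eq_empty_or_nonempty A with rfl | h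
    · simp at hgcd
    · exact h
  have hk : 1 ≤ A.card := Finset.card_pos.2 hA
  set b := A.card - 1 with hb
  have hcard : A.card = b + 1 := by omega
  set Q := ∏ a ∈ A, a with hQ
  have hQpos : 0 < Q := Finset.prod_pos hpos
  set s := ∑ a ∈ A, (a+1) with hs
  set c := (b+1).factorial * Q with hc
  have hcpos : 0 < c := Nat.mul_pos (Nat.factorial_pos _) hQpos
  set f : ℕ → ℕ := fun n => (Pp A n).card with hf
  obtain ⟨G, hG⟩ := card_Pp_mono A hpos hgcd
  -- split lemma for TT
  have hTTsplit : ∀ M t : ℕ, TT A (M + t) = TT A M + ∑ j ∈ Finset.Ico (M+1) (M+t+1), f j := by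
    intro M t
    unfold TT
    simp only [Finset.range_eq_Ico]
    exact (Finset.sum_Ico_consecutive (fun n => (Pp A n).card)
        (by omega : 0 ≤ M + 1) (by omega : M + 1 ≤ M + t + 1)).symm
  have hlow : ∀ N, N ^ (b+1) ≤ c * TT A N := by
    intro N
    have := TT_lower A hpos N
    rwa [hcard] at this
  have hup : ∀ N, c * TT A N ≤ (N + s) ^ (b+1) := by
    intro N
    have := TT_upper A hpos N
    rwa [hcard] at this
  have MU : ∀ n h : ℕ, (n + G)^(b+1) + c * (h+1) * f n ≤ (n + G + h + 1 + s)^(b+1) := by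
    intro n h
    have hsplit := hTTsplit (n+G) (h+1)
    have hsum : (h+1) * f n ≤ ∑ j ∈ Finset.Ico (n+G+1) (n+G+h+1+1), f j := by
      have hcard2 : (Finset.Ico (n+G+1) (n+G+h+1+1)).card = h + 1 := by
        rw [Nat.card_Ico]; omega
      have := Finset.card_nsmul_le_sum (Finset.Ico (n+G+1) (n+G+h+1+1)) f (f n)
        (fun j hj => by
          rw [Finset.mem_Ico] at hj
          exact hG n j (by omega))
      rwa [hcard2, smul_eq_mul] at this
    calc (n + G)^(b+1) + c * (h+1) * f n
        ≤ c * TT A (n+G) + c * ((h+1) * f n) := by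
          have h1 := hlow (n+G)
          have h2 : c * ((h+1) * f n) = c * (h+1) * f n := by ring
          omega
      _ ≤ c * TT A (n+G) + c * ∑ j ∈ Finset.Ico (n+G+1) (n+G+h+1+1), f j := by
          exact Nat.add_le_add_left (Nat.mul_le_mul_left c hsum) _
      _ = c * TT A (n+G+(h+1)) := by rw [hsplit]; ring_nf
      _ ≤ (n+G+(h+1) + s)^(b+1) := hup _
      _ = (n + G + h + 1 + s)^(b+1) := by ring_nf
  have MD : ∀ m h : ℕ, (m + h + 1)^(b+1) ≤ c * (h+1) * f (m + h + 2 + G) + (m + s)^(b+1) := by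
    intro m h
    have hsplit := hTTsplit m (h+1)
    have hsum : ∑ j ∈ Finset.Ico (m+1) (m+h+1+1), f j ≤ (h+1) * f (m + h + 2 + G) := by
      have hcard2 : (Finset.Ico (m+1) (m+h+1+1)).card = h + 1 := by
        rw [Nat.card_Ico]; omega
      have := Finset.sum_le_card_nsmul (Finset.Ico (m+1) (m+h+1+1)) f (f (m + h + 2 + G))
        (fun j hj => by
          rw [Finset.mem_Ico] at hj
          exact hG j (m+h+2+G) (by omega))
      rwa [hcard2, smul_eq_mul] at this
    calc (m + h + 1)^(b+1) ≤ c * TT A (m+h+1) := hlow _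
      _ = c * TT A m + c * ∑ j ∈ Finset.Ico (m+1) (m+h+1+1), f j := by
          have : m + h + 1 = m + (h+1) := by omega
          rw [this, hsplit]; ring_nf
      _ ≤ c * TT A m + c * ((h+1) * f (m + h + 2 + G)) :=
          Nat.add_le_add_left (Nat.mul_le_mul_left c hsum) _
      _ ≤ (m + s)^(b+1) + c * (h+1) * f (m + h + 2 + G) := by
          have h1 := hup m
          have h2 : c * ((h+1) * f (m+h+2+G)) = c * (h+1) * f (m+h+2+G) := by ring
          omega
      _ = c * (h+1) * f (m + h + 2 + G) + (m + s)^(b+1) := by ring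
  have htend := tauberian f b s G c hcpos MU MD
  refine Tendsto.congr' ?_ htend
  filter_upwards [eventually_ge_atTop 1] with n hn
  have hnpos : (0:ℝ) < (n:ℝ) := by exact_mod_cast hn
  have hnb : (0:ℝ) < (n:ℝ)^b := by positivity
  have hfact : (0:ℝ) < (b.factorial : ℝ) := by exact_mod_cast Nat.factorial_pos b
  have hQR : (0:ℝ) < (Q:ℝ) := by exact_mod_cast hQpos
  have hprod : (∏ a ∈ A, (a:ℝ)) = (Q:ℝ) := by
    rw [hQ]; push_cast; rfl
  have hcR : (c:ℝ) = ((b:ℝ)+1) * (b.factorial : ℝ) * (Q:ℝ) := by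
    rw [hc]; push_cast [Nat.factorial_succ]; ring
  rw [partitionsIn_eq_card_Pp hpos n, hprod]
  rw [hcR]
  field_simp
  ring
end

section
/- Let A = {1, 2, ..., k} be the set of the first k positive integers and let p_A(n) be the number of partitions of n with parts in A. Then p_A(n) is asymptotically equal to n^{k-1}/(k!·(k-1)!) as n → ∞. -/
open Filter

namespace PartAsymp
open Finset

variable (K : ℕ)

def Cset (n : ℕ) : Finset (Fin K → ℕ) := Finset.piAntidiag Finset.univ n
def Aset (n : ℕ) : Finset (Fin K → ℕ) := (Cset K n).filter Monotone
def Sset (n : ℕ) : Finset (Fin K → ℕ) := (Cset K n).filter StrictMono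

def Mw (n : ℕ) : Finset (Fin K → ℕ) :=
  (Fintype.piFinset fun _ : Fin K => Finset.range (n+1)).filter
    (fun x => ∑ i : Fin K, (K - (i : ℕ)) * x i = n)

lemma mem_Cset {K n : ℕ} {x : Fin K → ℕ} : x ∈ Cset K n ↔ ∑ i, x i = n := by
  simp [Cset]

lemma mem_Mw {K n : ℕ} {x : Fin K → ℕ} :
    x ∈ Mw K n ↔ (∀ i, x i ≤ n) ∧ ∑ i : Fin K, (K - (i : ℕ)) * x i = n := by
  simp [Mw, Nat.lt_succ_iff]

lemma card_Cset (n : ℕ) : (Cset K n).card = (K + n - 1).choose n := by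
  rw [Cset, ← Finset.map_sym_eq_piAntidiag, Finset.card_map, Finset.sym_univ,
    ← Fintype.card, Sym.card_sym_eq_choose, Fintype.card_fin]

lemma comp_perm_mem_Cset {K n : ℕ} {x : Fin K → ℕ} (hx : x ∈ Cset K n)
    (σ : Equiv.Perm (Fin K)) : x ∘ σ ∈ Cset K n := by
  rw [mem_Cset] at hx ⊢
  rw [← hx]
  exact Fintype.sum_equiv σ _ _ (fun i => rfl)

lemma card_Cset_le (n : ℕ) : (Cset K n).card ≤ K.factorial * (Aset K n).card := by
  have h := Finset.card_le_mul_card_image (f := fun x : Fin K → ℕ => x ∘ Tuple.sort x)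
    (Cset K n) K.factorial ?_
  · refine h.trans (Nat.mul_le_mul_left _ (Finset.card_le_card ?_))
    intro y hy
    simp only [Finset.mem_image] at hy
    obtain ⟨x, hx, rfl⟩ := hy
    exact Finset.mem_filter.2 ⟨comp_perm_mem_Cset hx _, Tuple.monotone_sort x⟩
  · intro a _
    calc ((Cset K n).filter fun x => x ∘ Tuple.sort x = a).card
        ≤ ((Finset.univ : Finset (Equiv.Perm (Fin K))).image fun σ : Equiv.Perm (Fin K) => a ∘ ⇑σ).card := by
          apply Finset.card_le_card
          intro x hx
          rw [Finset.mem_filter] at hx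
          refine Finset.mem_image.2 ⟨(Tuple.sort x)⁻¹, Finset.mem_univ _, ?_⟩
          rw [← hx.2]
          ext i
          simp
      _ ≤ K.factorial := by
          refine (Finset.card_image_le.trans ?_)
          rw [Finset.card_univ, Fintype.card_perm, Fintype.card_fin]

lemma strictMono_perm_eq_refl {K : ℕ} {e : Equiv.Perm (Fin K)}
    (he : StrictMono (e : Fin K → Fin K)) : e = Equiv.refl _ := by
  have inst : WellFoundedLT (Fin K) := inferInstance
  have h2 := @StrictMono.range_inj (Fin K) (Fin K) _ _ inst ⇑e id he strictMono_id
  have h3 : (e : Fin K → Fin K) = id :=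
    h2.1 (by rw [Set.range_id]; exact Set.range_eq_univ.2 e.surjective)
  ext i
  exact congrArg Fin.val (congrFun h3 i)

lemma card_Sset_le (m : ℕ) : K.factorial * (Sset K m).card ≤ (Cset K m).card := by
  classical
  have := Finset.card_le_card_of_injOn
    (f := fun p : Equiv.Perm (Fin K) × (Fin K → ℕ) => p.2 ∘ p.1)
    (s := Finset.univ ×ˢ Sset K m) (t := Cset K m) ?_ ?_
  · rwa [Finset.card_product, Finset.card_univ, Fintype.card_perm, Fintype.card_fin] at this
  · rintro ⟨σ, x⟩ hp
    simp only [Finset.mem_coe, Finset.mem_product, Finset.mem_univ, true_and, Sset, Finset.mem_filter] at hp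
    exact comp_perm_mem_Cset hp.1 σ
  · rintro ⟨σ, x⟩ hp ⟨τ, y⟩ hq h
    simp only [Finset.coe_product, Set.mem_prod, Finset.mem_coe, Sset, Finset.mem_filter] at hp hq
    have hx : StrictMono x := hp.2.2
    have hy : StrictMono y := hq.2.2
    simp only at h
    have key : ∀ j, x j = y ((σ.symm.trans τ) j) := by
      intro j
      have := congrFun h (σ.symm j)
      simpa using this
    have hmono : StrictMono ((σ.symm.trans τ : Equiv.Perm (Fin K)) : Fin K → Fin K) := by
      intro i j hij
      have h1 : x i < x j := hx hij
      rw [key i, key j] at h1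
      exact hy.lt_iff_lt.mp h1
    have hrefl : σ.symm.trans τ = Equiv.refl _ := strictMono_perm_eq_refl hmono
    have hστ : σ = τ := by
      ext i
      have := congrFun (congrArg (fun (e : Equiv.Perm (Fin K)) => (e : Fin K → Fin K)) hrefl) (σ i)
      exact congrArg Fin.val (by simpa using this.symm)
    have hxy : x = y := by
      funext j
      rw [key j, hrefl]
      rfl
    simp [hστ, hxy]

/-- index sum -/
def T : ℕ := ∑ i : Fin K, (i : ℕ)

lemma strictMono_fin_le {K : ℕ} {μ : Fin K → ℕ} (h : StrictMono μ) (j : Fin K) :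
    (j : ℕ) ≤ μ j := by
  have key : ∀ m (j : Fin K), (j : ℕ) = m → m ≤ μ j := by
    intro m
    induction m with
    | zero => intro j _; exact Nat.zero_le _
    | succ m ih =>
      intro j hj
      have hlt : m < K := by have := j.isLt; omega
      have h1 : (⟨m, hlt⟩ : Fin K) < j := by
        rw [Fin.lt_def]; simp; omega
      have h2 := ih ⟨m, hlt⟩ rfl
      have h3 := h h1
      omega
  exact key _ j rfl

lemma strictMono_fin_add_le {K : ℕ} {μ : Fin K → ℕ} (h : StrictMono μ) {i j : Fin K}
    (hij : i ≤ j) : μ i + ((j : ℕ) - (i : ℕ)) ≤ μ j := by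
  have key : ∀ m (j : Fin K), (j : ℕ) = (i : ℕ) + m → μ i + m ≤ μ j := by
    intro m
    induction m with
    | zero =>
      intro j hj
      have : i = j := Fin.ext (by omega)
      subst this
      omega
    | succ m ih =>
      intro j hj
      have hlt : (i : ℕ) + m < K := by have := j.isLt; omega
      have h1 : (⟨(i : ℕ) + m, hlt⟩ : Fin K) < j := by rw [Fin.lt_def]; simp; omega
      have h2 := ih ⟨(i : ℕ) + m, hlt⟩ rfl
      have h3 := h h1
      omega
  have : (i : ℕ) ≤ (j : ℕ) := hij
  exact key _ j (by omega)

lemma card_Aset_eq_card_Sset (n : ℕ) : (Aset K n).card = (Sset K (n + T K)).card := by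
  classical
  refine Finset.card_bij' (fun f _ => fun j => f j + (j : ℕ))
    (fun μ _ => fun j => μ j - (j : ℕ)) ?_ ?_ ?_ ?_
  · intro a ha
    simp only [Aset, Finset.mem_filter, mem_Cset] at ha
    simp only [Sset, Finset.mem_filter, mem_Cset]
    refine ⟨?_, ?_⟩
    · rw [Finset.sum_add_distrib, ha.1]; rfl
    · intro i j hij
      have := ha.2 hij.le
      have h2 : (i : ℕ) < (j : ℕ) := hij
      dsimp only
      omega
  · intro a ha
    simp only [Sset, Finset.mem_filter, mem_Cset] at ha
    simp only [Aset, Finset.mem_filter, mem_Cset]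
    constructor
    · have hle : ∀ j : Fin K, (j : ℕ) ≤ a j := strictMono_fin_le ha.2
      have hsum : ∑ x : Fin K, (a x - (x : ℕ) + (x : ℕ)) = ∑ x : Fin K, a x :=
        Finset.sum_congr rfl fun j _ => by have := hle j; omega
      have : ∑ j : Fin K, (a j - (j : ℕ)) + T K = n + T K := by
        rw [T, ← Finset.sum_add_distrib, hsum, ha.1, T]
      omega
    · intro i j hij
      rcases eq_or_lt_of_le hij with h | h
      · rw [h]
      · have h1 := strictMono_fin_add_le ha.2 h.le
        have h2 : (i : ℕ) < (j : ℕ) := h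
        have h3 := strictMono_fin_le ha.2 i
        dsimp only
        omega
  · intro a _
    funext j
    simp
  · intro a ha
    simp only [Sset, Finset.mem_filter, mem_Cset] at ha
    funext j
    have := strictMono_fin_le ha.2 j
    simp
    omega

def Fsum (x : Fin K → ℕ) : Fin K → ℕ := fun j => ∑ i ∈ Finset.Iic j, x i

def Gdiff (μ : Fin K → ℕ) : Fin K → ℕ := fun i =>
  μ i - (if (i : ℕ) = 0 then 0
    else μ ⟨(i : ℕ) - 1, Nat.lt_of_le_of_lt (Nat.sub_le _ _) i.isLt⟩)

lemma Iic_eq_insert {K : ℕ} {j j' : Fin K} (h : (j' : ℕ) + 1 = (j : ℕ)) :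
    Finset.Iic j = insert j (Finset.Iic j') := by
  ext a
  simp only [Finset.mem_Iic, Finset.mem_insert, Fin.le_def, Fin.ext_iff]
  omega

lemma Iic_eq_singleton {K : ℕ} {j : Fin K} (h : (j : ℕ) = 0) :
    Finset.Iic j = {j} := by
  ext a
  simp only [Finset.mem_Iic, Finset.mem_singleton, Fin.le_def, Fin.ext_iff]
  omega

lemma Fsum_Gdiff {K : ℕ} {μ : Fin K → ℕ} (hm : Monotone μ) : Fsum K (Gdiff K μ) = μ := by
  funext j
  have key : ∀ m (j : Fin K), (j : ℕ) = m → Fsum K (Gdiff K μ) j = μ j := by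
    intro m
    induction m with
    | zero =>
      intro j hj
      rw [Fsum, Iic_eq_singleton hj, Finset.sum_singleton, Gdiff]
      simp [hj]
    | succ m ih =>
      intro j hj
      have hlt : m < K := by have := j.isLt; omega
      set j' : Fin K := ⟨m, hlt⟩ with hj'
      have h1 : (j' : ℕ) + 1 = (j : ℕ) := by simp [hj', hj]
      have hnot : j ∉ Finset.Iic j' := by
        simp only [Finset.mem_Iic, Fin.le_def]
        simp [hj', hj]
      rw [Fsum, Iic_eq_insert h1, Finset.sum_insert hnot]
      have h2 : ∑ i ∈ Finset.Iic j', Gdiff K μ i = μ j' := ih j' rfl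
      rw [h2, Gdiff]
      have hmono : μ j' ≤ μ j := hm (by rw [Fin.le_def]; omega)
      have hif : (if (j : ℕ) = 0 then 0
          else μ ⟨(j : ℕ) - 1, Nat.lt_of_le_of_lt (Nat.sub_le _ _) j.isLt⟩) = μ j' := by
        rw [if_neg (by omega)]
        congr 1
        rw [Fin.ext_iff]
        simp [hj', hj]
      rw [hif]
      omega
  exact key _ j rfl

lemma Gdiff_Fsum {K : ℕ} (x : Fin K → ℕ) : Gdiff K (Fsum K x) = x := by
  funext i
  by_cases h : (i : ℕ) = 0
  · rw [Gdiff]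
    simp only [h, if_pos]
    rw [Fsum, Iic_eq_singleton h, Finset.sum_singleton]
    simp
  · set i' : Fin K := ⟨(i : ℕ) - 1, Nat.lt_of_le_of_lt (Nat.sub_le _ _) i.isLt⟩ with hi'
    have h1 : (i' : ℕ) + 1 = (i : ℕ) := by simp [hi']; omega
    have hnot : i ∉ Finset.Iic i' := by
      simp only [Finset.mem_Iic, Fin.le_def]
      simp [hi']
      omega
    rw [Gdiff]
    simp only [if_neg h]
    show Fsum K x i - Fsum K x i' = x i
    rw [Fsum, Iic_eq_insert h1, Finset.sum_insert hnot]
    simp [Fsum]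
lemma sum_Fsum {K : ℕ} (x : Fin K → ℕ) :
    ∑ j, Fsum K x j = ∑ i : Fin K, (K - (i : ℕ)) * x i := by
  have h1 : ∀ j : Fin K, Fsum K x j = ∑ i : Fin K, if i ≤ j then x i else 0 := by
    intro j
    rw [Fsum, ← Finset.sum_filter]
    congr 1
    ext a
    simp
  simp only [h1]
  rw [Finset.sum_comm]
  refine Finset.sum_congr rfl fun i _ => ?_
  rw [← Finset.sum_filter]
  have : Finset.filter (fun j => i ≤ j) Finset.univ = Finset.Ici i := by
    ext a; simp
  rw [this, Finset.sum_const, Fin.card_Ici]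
  simp [mul_comm]

lemma card_Mw_eq_card_Aset (n : ℕ) : (Mw K n).card = (Aset K n).card := by
  classical
  refine Finset.card_bij' (fun x _ => Fsum K x) (fun μ _ => Gdiff K μ) ?_ ?_ ?_ ?_
  · intro x hx
    rw [mem_Mw] at hx
    rw [Aset, Finset.mem_filter, mem_Cset]
    refine ⟨by rw [sum_Fsum, hx.2], ?_⟩
    intro i j hij
    exact Finset.sum_le_sum_of_subset (Finset.Iic_subset_Iic.2 hij)
  · intro μ hμ
    rw [Aset, Finset.mem_filter, mem_Cset] at hμ
    rw [mem_Mw]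
    constructor
    · intro i
      calc Gdiff K μ i ≤ μ i := Nat.sub_le _ _
        _ ≤ ∑ j, μ j := Finset.single_le_sum (fun _ _ => Nat.zero_le _) (Finset.mem_univ i)
        _ = n := hμ.1
    · rw [← sum_Fsum, Fsum_Gdiff hμ.2, hμ.1]
  · intro x _
    exact Gdiff_Fsum x
  · intro μ hμ
    rw [Aset, Finset.mem_filter] at hμ
    exact Fsum_Gdiff hμ.2

lemma sum_fin_eq_sum_Icc {K : ℕ} (hK : 0 < K) (f : ℕ → ℕ) :
    ∑ i : Fin K, f (K - (i : ℕ)) = ∑ m ∈ Finset.Icc 1 K, f m := by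
  refine Finset.sum_nbij' (fun i => K - (i : ℕ))
    (fun m => ⟨K - max m 1, by omega⟩) ?_ ?_ ?_ ?_ ?_
  · intro a _
    have := a.isLt
    simp only [Finset.mem_Icc]
    omega
  · intro m hm
    exact Finset.mem_univ _
  · intro a _
    have := a.isLt
    rw [Fin.ext_iff]
    simp
    omega
  · intro m hm
    simp only [Finset.mem_Icc] at hm
    simp
    omega
  · intro a _
    rfl

lemma key_sum {K : ℕ} (hK : 0 < K) (s : Multiset ℕ) (hs : ∀ a ∈ s, a ∈ Finset.Icc 1 K) :
    ∑ i : Fin K, (K - (i : ℕ)) * s.count (K - (i : ℕ)) = s.sum := by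
  rw [sum_fin_eq_sum_Icc hK (fun m => m * s.count m)]
  rw [← Finset.sum_subset (s₁ := s.toFinset) (fun a ha => hs a (Multiset.mem_toFinset.1 ha))
    (fun x _ hx => by simp [Multiset.count_eq_zero_of_notMem (fun h => hx (Multiset.mem_toFinset.2 h))])]
  have h3 := Finset.sum_multiset_map_count s (fun x => x)
  simp only [Multiset.map_id', smul_eq_mul] at h3
  rw [h3]
  exact Finset.sum_congr rfl fun a _ => mul_comm _ _

lemma replicate_sum_eq {K : ℕ} (hK : 0 < K) (s : Multiset ℕ) (hs : ∀ a ∈ s, a ∈ Finset.Icc 1 K) :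
    ∑ i : Fin K, Multiset.replicate (s.count (K - (i : ℕ))) (K - (i : ℕ)) = s := by
  have h1 : ∀ m : ℕ, Multiset.replicate (s.count m) m = s.count m • ({m} : Multiset ℕ) := by
    intro m; rw [Multiset.nsmul_singleton]
  -- reindex to Icc
  have h2 : ∑ i : Fin K, Multiset.replicate (s.count (K - (i : ℕ))) (K - (i : ℕ))
      = ∑ m ∈ Finset.Icc 1 K, Multiset.replicate (s.count m) m := by
    refine Finset.sum_nbij' (fun i => K - (i : ℕ))
      (fun m => ⟨K - max m 1, by omega⟩) ?_ ?_ ?_ ?_ ?_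
    · intro a _
      have := a.isLt
      simp only [Finset.mem_Icc]
      omega
    · intro m hm
      exact Finset.mem_univ _
    · intro a _
      have := a.isLt
      rw [Fin.ext_iff]
      simp
      omega
    · intro m hm
      simp only [Finset.mem_Icc] at hm
      simp
      omega
    · intro a _
      rfl
  rw [h2, ← Finset.sum_subset (s₁ := s.toFinset) (fun a ha => hs a (Multiset.mem_toFinset.1 ha))
    (fun x _ hx => by simp [Multiset.count_eq_zero_of_notMem (fun h => hx (Multiset.mem_toFinset.2 h))])]
  simp only [h1]
  exact Multiset.toFinset_sum_count_nsmul_eq s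

lemma partitionsIn_eq_card_Mw {K : ℕ} (hK : 0 < K) (n : ℕ) :
    partitionsIn (Finset.Icc 1 K) n = (Mw K n).card := by
  classical
  rw [partitionsIn]
  refine Finset.card_bij' (fun p _ => fun i : Fin K => p.parts.count (K - (i : ℕ)))
    (fun x hx => ⟨∑ i : Fin K, Multiset.replicate (x i) (K - (i : ℕ)), ?_, ?_⟩) ?_ ?_ ?_ ?_
  · intro a ha
    rw [Multiset.mem_sum] at ha
    obtain ⟨i, _, hi⟩ := ha
    have := Multiset.eq_of_mem_replicate hi
    have := i.isLt
    omega
  · rw [mem_Mw] at hx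
    have : ∀ i : Fin K, (Multiset.replicate (x i) (K - (i : ℕ))).sum = (K - (i : ℕ)) * x i := by
      intro i
      rw [Multiset.sum_replicate, smul_eq_mul, mul_comm]
    rw [Multiset.sum_sum]
    simp only [this]
    exact hx.2
  · intro p hp
    rw [Finset.mem_filter] at hp
    rw [mem_Mw]
    constructor
    · intro i
      calc p.parts.count (K - (i : ℕ)) ≤ Multiset.card p.parts := Multiset.count_le_card _ _
        _ ≤ p.parts.sum := by
            have := Multiset.card_nsmul_le_sum (s := p.parts) (a := 1) (fun x hx => p.parts_pos hx)
            simpa using this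
        _ = n := p.parts_sum
    · rw [key_sum hK _ hp.2, p.parts_sum]
  · intro x hx
    rw [Finset.mem_filter]
    refine ⟨Finset.mem_univ _, ?_⟩
    intro a ha
    simp only [Multiset.mem_sum] at ha
    obtain ⟨i, _, hi⟩ := ha
    have h1 := Multiset.eq_of_mem_replicate hi
    have := i.isLt
    simp only [Finset.mem_Icc]
    omega
  · intro p hp
    rw [Finset.mem_filter] at hp
    exact Nat.Partition.ext (replicate_sum_eq hK _ hp.2)
  · intro x hx
    funext i
    simp only
    rw [Multiset.count_sum']
    rw [Finset.sum_eq_single i]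
    · rw [Multiset.count_replicate, if_pos rfl]
    · intro j _ hji
      rw [Multiset.count_replicate, if_neg]
      intro h
      apply hji
      have hi := i.isLt
      have hj := j.isLt
      exact Fin.ext (by omega)
    · intro h
      exact absurd (Finset.mem_univ i) h

end PartAsymp

section Analysis
open Finset

lemma fac_tendsto (d : ℕ) :
    Tendsto (fun n : ℕ => ((n + d : ℕ) : ℝ) / (n : ℝ)) atTop (nhds 1) := by
  have h0 : Tendsto (fun n : ℕ => (d : ℝ) / (n : ℝ)) atTop (nhds 0) :=
    tendsto_const_div_atTop_nhds_zero_nat (d : ℝ)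
  have h1 : Tendsto (fun n : ℕ => 1 + (d : ℝ) / (n : ℝ)) atTop (nhds 1) := by
    simpa using tendsto_const_nhds.add h0
  refine h1.congr' ?_
  filter_upwards [eventually_ge_atTop 1] with n hn
  have hn' : (n : ℝ) ≠ 0 := by positivity
  push_cast
  field_simp

lemma choose_asym (r c : ℕ) (hc : r ≤ c) :
    Tendsto (fun n : ℕ => (((n + c).choose r : ℝ) * (r.factorial : ℝ)) / (n : ℝ) ^ r)
      atTop (nhds 1) := by
  have key : ∀ n : ℕ, ((n + c).choose r : ℝ) * (r.factorial : ℝ)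
      = ∏ i ∈ Finset.range r, ((n + (c - i) : ℕ) : ℝ) := by
    intro n
    have h1 : (n + c).descFactorial r = ∏ i ∈ Finset.range r, (n + (c - i)) := by
      rw [Nat.descFactorial_eq_prod_range]
      exact Finset.prod_congr rfl fun i hi => by
        have := Finset.mem_range.1 hi; omega
    have h2 := Nat.descFactorial_eq_factorial_mul_choose (n + c) r
    rw [h1] at h2
    have := congrArg (fun m : ℕ => (m : ℝ)) h2
    push_cast at this ⊢
    rw [mul_comm] at this
    rw [← this]
  have hprod : Tendsto (fun n : ℕ => ∏ i ∈ Finset.range r, (((n + (c - i) : ℕ) : ℝ) / (n : ℝ)))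
      atTop (nhds 1) := by
    have := tendsto_finset_prod (f := fun (i : ℕ) (n : ℕ) => ((n + (c - i) : ℕ) : ℝ) / (n : ℝ))
      (a := fun _ => (1 : ℝ)) (Finset.range r) (fun i _ => fac_tendsto (c - i))
    simpa using this
  refine hprod.congr ?_
  intro n
  rw [key, Finset.prod_div_distrib, Finset.prod_const, Finset.card_range]

end Analysis

/-- For `A = {1, 2, ..., k}`, the number of partitions of `n` with parts in `A`
is asymptotic to `n^(k-1) / (k! · (k-1)!)` as `n → ∞`. -/
theorem partitionsIn_Icc_ratio_tendsto_one (k : ℕ) (hk : 0 < k) :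
    Tendsto (fun n : ℕ => (partitionsIn (Finset.Icc 1 k) n : ℝ) /
        ((n : ℝ) ^ (k - 1) / (Nat.factorial k * Nat.factorial (k - 1))))
      atTop (nhds 1) := by
  classical
  set r := k - 1 with hr
  have hpart : ∀ n : ℕ, partitionsIn (Finset.Icc 1 k) n = (PartAsymp.Aset k n).card := by
    intro n
    rw [PartAsymp.partitionsIn_eq_card_Mw hk n, PartAsymp.card_Mw_eq_card_Aset]
  have hCcard : ∀ m : ℕ, (PartAsymp.Cset k m).card = (m + r).choose r := by
    intro m
    rw [PartAsymp.card_Cset]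
    have h1 : k + m - 1 = m + r := by omega
    rw [h1]
    have h2 := Nat.choose_symm (Nat.le_add_right m r)
    rw [Nat.add_sub_cancel_left] at h2
    exact h2.symm
  have hlow : ∀ n : ℕ, (n + r).choose r ≤ k.factorial * (PartAsymp.Aset k n).card := by
    intro n
    rw [← hCcard]
    exact PartAsymp.card_Cset_le k n
  have hhigh : ∀ n : ℕ, k.factorial * (PartAsymp.Aset k n).card
      ≤ (n + (PartAsymp.T k + r)).choose r := by
    intro n
    rw [← add_assoc, ← hCcard, PartAsymp.card_Aset_eq_card_Sset]
    exact PartAsymp.card_Sset_le k _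
  have hL := choose_asym r r le_rfl
  have hU := choose_asym r (PartAsymp.T k + r) (Nat.le_add_left r _)
  refine tendsto_of_tendsto_of_tendsto_of_le_of_le' hL hU ?_ ?_
  · filter_upwards [eventually_ge_atTop 1] with n hn
    have hnpos : (0 : ℝ) < (n : ℝ) ^ r := by positivity
    rw [hpart n, div_div_eq_mul_div, div_le_div_iff_of_pos_right hnpos]
    calc ((((n + r).choose r : ℕ) : ℝ)) * (r.factorial : ℝ)
        ≤ ((k.factorial * (PartAsymp.Aset k n).card : ℕ) : ℝ) * (r.factorial : ℝ) := by
          have := hlow n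
          gcongr
      _ = ((PartAsymp.Aset k n).card : ℝ) * ((k.factorial : ℝ) * (r.factorial : ℝ)) := by
          push_cast; ring
  · filter_upwards [eventually_ge_atTop 1] with n hn
    have hnpos : (0 : ℝ) < (n : ℝ) ^ r := by positivity
    rw [hpart n, div_div_eq_mul_div, div_le_div_iff_of_pos_right hnpos]
    calc ((PartAsymp.Aset k n).card : ℝ) * ((k.factorial : ℝ) * (r.factorial : ℝ))
        = ((k.factorial * (PartAsymp.Aset k n).card : ℕ) : ℝ) * (r.factorial : ℝ) := by
          push_cast; ring
      _ ≤ (((n + (PartAsymp.T k + r)).choose r : ℕ) : ℝ) * (r.factorial : ℝ) := by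
          have := hhigh n
          gcongr
end

section
/- Let A = {a_1, ..., a_k} be a set of k ≥ 2 positive integers with gcd(a_1, ..., a_k) = 1, let d = gcd(a_1, ..., a_{k-1}), and suppose all of a_1, ..., a_{k-1} are divisible by d with a_i' = a_i/d and A' = {a_1', ..., a_{k-1}'}. Let n ≥ (d-1)·a_k, let u be the unique integer with 0 ≤ u ≤ d-1 and n ≡ u·a_k (mod d), let m = (n - u·a_k)/d, and let r = ⌊m/a_k⌋. Then p_A(n) = Σ_{ℓ=0}^{r} p_{A'}(m - ℓ·a_k). -/
/-- The multisets of parts of partitions of `N` with parts in `A`. -/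
private def msetsIn (A : Finset ℕ) (N : ℕ) : Finset (Multiset ℕ) :=
  (Finset.univ.filter fun p : Nat.Partition N => ∀ i ∈ p.parts, i ∈ A).image
    Nat.Partition.parts

private lemma card_msetsIn (A : Finset ℕ) (N : ℕ) :
    (msetsIn A N).card = partitionsIn A N :=
  Finset.card_image_of_injective _ fun p q h => Nat.Partition.ext h

private lemma mem_msetsIn {A : Finset ℕ} {N : ℕ} {s : Multiset ℕ} :
    s ∈ msetsIn A N ↔ s.sum = N ∧ (∀ i ∈ s, i ∈ A) ∧ ∀ i ∈ s, 0 < i := by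
  constructor
  · intro hs
    simp only [msetsIn, Finset.mem_image, Finset.mem_filter] at hs
    obtain ⟨p, ⟨_, hp⟩, rfl⟩ := hs
    exact ⟨p.parts_sum, hp, fun i hi => p.parts_pos hi⟩
  · rintro ⟨h1, h2, h3⟩
    simp only [msetsIn, Finset.mem_image, Finset.mem_filter]
    exact ⟨⟨s, fun {i} hi => h3 i hi, h1⟩, ⟨Finset.mem_univ _, h2⟩, rfl⟩

/-- Peeling off the copies of `ak`. -/
private lemma step1 (B : Finset ℕ) (ak : ℕ) (hak : 0 < ak) (hmem : ak ∉ B) (N : ℕ) :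
    partitionsIn (insert ak B) N =
      ∑ j ∈ Finset.range (N / ak + 1), partitionsIn B (N - j * ak) := by
  have hset : msetsIn (insert ak B) N =
      (Finset.range (N / ak + 1)).biUnion
        (fun j => (msetsIn B (N - j * ak)).image
          (fun s => s + Multiset.replicate j ak)) := by
    ext s
    simp only [Finset.mem_biUnion, Finset.mem_range, Finset.mem_image, mem_msetsIn]
    constructor
    · rintro ⟨hsum, hmemA, hposs⟩
      have hsplit : Multiset.replicate (s.count ak) ak + s.filter (· ≠ ak) = s := by
        simp only [ne_eq]
        have h := Multiset.filter_add_not (· = ak) s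
        rwa [Multiset.filter_eq'] at h
      have hsum2 : s.count ak * ak + (s.filter (· ≠ ak)).sum = N := by
        conv_rhs => rw [← hsum]
        conv_rhs => rw [← hsplit]
        rw [Multiset.sum_add, Multiset.sum_replicate, smul_eq_mul]
      have hle : s.count ak * ak ≤ N := le_of_le_of_eq (Nat.le_add_right _ _) hsum2
      refine ⟨s.count ak, ?_, s.filter (· ≠ ak), ⟨?_, ?_, ?_⟩, ?_⟩
      · exact Nat.lt_succ_of_le ((Nat.le_div_iff_mul_le hak).2 hle)
      · omega
      · intro i hi
        rw [Multiset.mem_filter] at hi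
        have := hmemA i hi.1
        simp only [Finset.mem_insert] at this
        rcases this with h | h
        · exact absurd h hi.2
        · exact h
      · intro i hi
        exact hposs i (Multiset.mem_of_mem_filter hi)
      · rw [add_comm] at hsplit
        exact hsplit
    · rintro ⟨j, hj, t, ⟨ht1, ht2, ht3⟩, rfl⟩
      have hjle : j * ak ≤ N := by
        have h1 : j ≤ N / ak := Nat.lt_succ_iff.1 hj
        calc j * ak ≤ N / ak * ak := Nat.mul_le_mul_right _ h1
          _ ≤ N := Nat.div_mul_le_self _ _
      refine ⟨?_, ?_, ?_⟩
      · rw [Multiset.sum_add, ht1, Multiset.sum_replicate, smul_eq_mul]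
        exact Nat.sub_add_cancel hjle
      · intro i hi
        rw [Multiset.mem_add] at hi
        rcases hi with h | h
        · exact Finset.mem_insert_of_mem (ht2 i h)
        · rw [Multiset.eq_of_mem_replicate h]
          exact Finset.mem_insert_self _ _
      · intro i hi
        rw [Multiset.mem_add] at hi
        rcases hi with h | h
        · exact ht3 i h
        · rw [Multiset.eq_of_mem_replicate h]; exact hak
  have hcount : ∀ j, ∀ s ∈ (msetsIn B (N - j * ak)).image
      (fun s => s + Multiset.replicate j ak), s.count ak = j := by
    intro j s hs
    rw [Finset.mem_image] at hs
    obtain ⟨t, ht, rfl⟩ := hs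
    rw [mem_msetsIn] at ht
    have : t.count ak = 0 := by
      rw [Multiset.count_eq_zero]
      intro h
      exact hmem (ht.2.1 ak h)
    simp [Multiset.count_replicate, this]
  rw [← card_msetsIn, hset, Finset.card_biUnion]
  · refine Finset.sum_congr rfl fun j _ => ?_
    rw [Finset.card_image_of_injective _ (fun a b h => by
      exact add_right_cancel h), card_msetsIn]
  · intro x _ y _ hxy
    rw [Function.onFun, Finset.disjoint_left]
    intro s hsx hsy
    exact hxy ((hcount x s hsx).symm.trans (hcount y s hsy))

private lemma step2_notdvd (B : Finset ℕ) (d N : ℕ) (hdvd : ∀ b ∈ B, d ∣ b)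
    (hN : ¬ d ∣ N) : partitionsIn B N = 0 := by
  rw [← card_msetsIn, Finset.card_eq_zero, Finset.eq_empty_iff_forall_notMem]
  intro s hs
  rw [mem_msetsIn] at hs
  exact hN (hs.1 ▸ Multiset.dvd_sum fun i hi => hdvd i (hs.2.1 i hi))

private lemma sum_map_mul (t : Multiset ℕ) {d : ℕ} : (t.map (· * d)).sum = t.sum * d := by
  induction t using Multiset.induction with
  | empty => simp
  | cons a t ih => simp [add_mul, ih]

private lemma step2_dvd (B : Finset ℕ) (d N : ℕ) (hd : 0 < d)
    (hdvd : ∀ b ∈ B, d ∣ b) (hN : d ∣ N) :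
    partitionsIn B N = partitionsIn (B.image (· / d)) (N / d) := by
  rw [← card_msetsIn, ← card_msetsIn]
  have hinj : Function.Injective (fun s : Multiset ℕ => s.map (· * d)) :=
    Multiset.map_injective fun a b h => Nat.eq_of_mul_eq_mul_right hd h
  have hset : msetsIn B N =
      (msetsIn (B.image (· / d)) (N / d)).image (fun s => s.map (· * d)) := by
    ext s
    simp only [Finset.mem_image, mem_msetsIn]
    constructor
    · rintro ⟨hsum, hmemB, hposs⟩
      refine ⟨s.map (· / d), ⟨?_, ?_, ?_⟩, ?_⟩
      · have hback : (s.map (· / d)).map (· * d) = s := by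
          rw [Multiset.map_map]
          conv_rhs => rw [← Multiset.map_id' s]
          exact Multiset.map_congr rfl fun i hi =>
            Nat.div_mul_cancel (hdvd i (hmemB i hi))
        have hsum2 : (s.map (· / d)).sum * d = N := by
          rw [← sum_map_mul, hback, hsum]
        exact (Nat.div_eq_of_eq_mul_left hd hsum2.symm).symm
      · intro i hi
        rw [Multiset.mem_map] at hi
        obtain ⟨b, hb, rfl⟩ := hi
        exact ⟨b, hmemB b hb, rfl⟩
      · intro i hi
        rw [Multiset.mem_map] at hi
        obtain ⟨b, hb, rfl⟩ := hi
        exact Nat.div_pos (Nat.le_of_dvd (hposs b hb) (hdvd b (hmemB b hb))) hd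
      · rw [Multiset.map_map]
        conv_rhs => rw [← Multiset.map_id' s]
        exact Multiset.map_congr rfl fun i hi =>
          Nat.div_mul_cancel (hdvd i (hmemB i hi))
    · rintro ⟨t, ⟨ht1, ht2, ht3⟩, rfl⟩
      refine ⟨?_, ?_, ?_⟩
      · rw [sum_map_mul, ht1, Nat.div_mul_cancel hN]
      · intro i hi
        rw [Multiset.mem_map] at hi
        obtain ⟨b, hb, rfl⟩ := hi
        obtain ⟨c, hc, rfl⟩ := ht2 b hb
        rw [Nat.div_mul_cancel (hdvd c hc)]
        exact hc
      · intro i hi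
        rw [Multiset.mem_map] at hi
        obtain ⟨b, hb, rfl⟩ := hi
        exact Nat.mul_pos (ht3 b hb) hd
  rw [hset, Finset.card_image_of_injective _ hinj]

/-- Let `A = B ∪ {aₖ}` be a set of `k ≥ 2` relatively prime positive integers
(`B = {a₁, ..., a_{k-1}}` nonempty, `aₖ ∉ B`), let `d = gcd(B)` and
`A' = {a/d : a ∈ B}`.  For `n ≥ (d-1)·aₖ`, let `u` be the unique integer with
`0 ≤ u ≤ d-1` and `n ≡ u·aₖ (mod d)`, let `m = (n - u·aₖ)/d` and `r = ⌊m/aₖ⌋`.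
Then `p_A(n) = Σ_{ℓ=0}^{r} p_{A'}(m - ℓ·aₖ)`. -/
theorem partitionsIn_eq_sum (B : Finset ℕ) (ak : ℕ) (hB : B.Nonempty)
    (hak : 0 < ak) (hpos : ∀ b ∈ B, 0 < b) (hmem : ak ∉ B)
    (d : ℕ) (hd : d = B.gcd id) (hgcd : Nat.gcd d ak = 1)
    (n : ℕ) (hn : (d - 1) * ak ≤ n)
    (u : ℕ) (hu : u ≤ d - 1) (hmod : n ≡ u * ak [MOD d])
    (m : ℕ) (hm : m = (n - u * ak) / d)
    (r : ℕ) (hr : r = m / ak) :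
    partitionsIn (insert ak B) n =
      ∑ ℓ ∈ Finset.range (r + 1), partitionsIn (B.image (· / d)) (m - ℓ * ak) := by
  have hBdvd : ∀ b ∈ B, d ∣ b := fun b hb => hd ▸ Finset.gcd_dvd hb
  obtain ⟨b0, hb0⟩ := hB
  have hd1 : 0 < d := by
    rcases Nat.eq_zero_or_pos d with h | h
    · exfalso
      have := hBdvd b0 hb0
      rw [h] at this
      have := hpos b0 hb0
      omega
    · exact h
  have hud : u < d := by omega
  have huan : u * ak ≤ n := le_trans (Nat.mul_le_mul_right ak (by omega)) hn
  have hdm : n - u * ak = d * m := by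
    rw [hm, Nat.mul_div_cancel' ((Nat.modEq_iff_dvd' huan).1 hmod.symm)]
  -- key equivalence : for j*ak ≤ n, d ∣ n - j*ak ↔ j % d = u
  have hkey : ∀ j : ℕ, j * ak ≤ n → (d ∣ n - j * ak ↔ j % d = u) := by
    intro j hj
    rw [← Nat.modEq_iff_dvd' hj]
    constructor
    · intro h
      have h2 : j * ak ≡ u * ak [MOD d] := h.trans hmod
      have h3 : j ≡ u [MOD d] :=
        Nat.ModEq.cancel_right_of_coprime
          (by first | exact hgcd | (rw [Nat.gcd_comm]; exact hgcd)) h2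
      rw [Nat.ModEq] at h3
      rw [h3, Nat.mod_eq_of_lt hud]
    · intro h
      have h3 : j ≡ u [MOD d] := by
        rw [Nat.ModEq, h, Nat.mod_eq_of_lt hud]
      exact (h3.mul_right ak).trans hmod.symm
  rw [step1 B ak hak hmem n]
  have hcongr : ∀ j ∈ Finset.range (n / ak + 1),
      partitionsIn B (n - j * ak) =
        if j % d = u then partitionsIn (B.image (· / d)) (m - j / d * ak) else 0 := by
    intro j hj
    rw [Finset.mem_range, Nat.lt_succ_iff] at hj
    have hjak : j * ak ≤ n := le_trans (Nat.mul_le_mul_right _ hj)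
      (Nat.div_mul_le_self _ _)
    by_cases h : j % d = u
    · rw [if_pos h]
      have hjd : j = u + j / d * d := by
        conv_lhs => rw [← Nat.mod_add_div j d]
        rw [h]; ring
      have hval : n - j * ak = d * (m - j / d * ak) := by
        rw [Nat.mul_sub, ← hdm]
        have : j * ak = u * ak + d * (j / d * ak) := by
          conv_lhs => rw [hjd]; ring_nf
          ring
        omega
      rw [step2_dvd B d _ hd1 hBdvd ⟨_, hval⟩, hval,
        Nat.mul_div_cancel_left _ hd1]
    · rw [if_neg h]
      exact step2_notdvd B d _ hBdvd fun hdvd => h ((hkey j hjak).1 hdvd)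
  rw [Finset.sum_congr rfl hcongr, ← Finset.sum_filter]
  refine Finset.sum_nbij' (fun j => j / d) (fun ℓ => u + ℓ * d) ?_ ?_ ?_ ?_ ?_
  · intro j hj
    rw [Finset.mem_filter, Finset.mem_range, Nat.lt_succ_iff] at hj
    obtain ⟨hj1, hj2⟩ := hj
    have hjak : j * ak ≤ n := le_trans (Nat.mul_le_mul_right _ hj1)
      (Nat.div_mul_le_self _ _)
    rw [Finset.mem_range, Nat.lt_succ_iff, hr]
    -- show j / d ≤ m / ak
    rw [Nat.le_div_iff_mul_le hak]
    have hjd : j = u + j / d * d := by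
      conv_lhs => rw [← Nat.mod_add_div j d]
      rw [hj2]; ring
    have h1 : u * ak + j / d * d * ak ≤ n := by
      have heq : u * ak + j / d * d * ak = j * ak := by
        conv_rhs => rw [hjd]
        ring
      rw [heq]; exact hjak
    have h2 : d * (j / d * ak) ≤ d * m := by
      have : j / d * d * ak = d * (j / d * ak) := by ring
      omega
    exact Nat.le_of_mul_le_mul_left h2 hd1
  · intro ℓ hℓ
    rw [Finset.mem_range, Nat.lt_succ_iff, hr] at hℓ
    have hℓm : ℓ * ak ≤ m := le_trans (Nat.mul_le_mul_right _ hℓ)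
      (Nat.div_mul_le_self _ _)
    beta_reduce
    rw [Finset.mem_filter, Finset.mem_range, Nat.lt_succ_iff]
    constructor
    · rw [Nat.le_div_iff_mul_le hak]
      have : d * (ℓ * ak) ≤ d * m := Nat.mul_le_mul_left _ hℓm
      have h2 : (u + ℓ * d) * ak = u * ak + d * (ℓ * ak) := by ring
      omega
    · simp [Nat.add_mul_mod_self_right, Nat.mod_eq_of_lt hud]
  · intro j hj
    beta_reduce
    rw [Finset.mem_filter] at hj
    have hjd : j % d = u := hj.2
    conv_rhs => rw [← Nat.mod_add_div j d]
    rw [hjd]; ring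
  · intro ℓ hℓ
    beta_reduce
    rw [Nat.add_mul_div_right _ _ hd1, Nat.div_eq_of_lt hud, zero_add]
  · intro j hj
    rfl
end
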